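/- A rank one tensor 𝒜 ∈ ℝ^{n₁×…×n_d} is a best rank one approximation of a nonzero tensor T if and only if ⟨T, 𝒜⟩ = ‖T‖²_{∞,2} = ‖𝒜‖². -/
import Mathlib


noncomputable section

/-- The decomposable tensor `x₁ ⊗ ⋯ ⊗ x_d`, as a multi-indexed array. -/
def dtens {ι : Type*} [Fintype ι] {n : ι → ℕ} (x : ∀ j, Fin (n j) → ℝ) :
    (∀ j, Fin (n j)) → ℝ :=
  fun idx => ∏ j, x j (idx j)

/-- Entrywise inner product of tensors. -/
def tinner {ι : Type*} [Fintype ι] [DecidableEq ι] {n : ι → ℕ}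
    (S T : (∀ j, Fin (n j)) → ℝ) : ℝ :=
  ∑ idx, S idx * T idx

/-- Hilbert–Schmidt norm of a tensor. -/
def hsNorm {ι : Type*} [Fintype ι] [DecidableEq ι] {n : ι → ℕ}
    (T : (∀ j, Fin (n j)) → ℝ) : ℝ :=
  Real.sqrt (∑ idx, T idx ^ 2)

/-- `v` is a unit vector in `ℝ^m`. -/
def isUnitVec {m : ℕ} (v : Fin m → ℝ) : Prop := ∑ i, v i ^ 2 = 1

/-- The spectral (`(∞,2)`-Schatten) norm of a tensor: the supremum of
`|⟨T, x₁ ⊗ ⋯ ⊗ x_d⟩|` over unit vectors `x_j`. -/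
def specNorm {ι : Type*} [Fintype ι] [DecidableEq ι] {n : ι → ℕ}
    (T : (∀ j, Fin (n j)) → ℝ) : ℝ :=
  sSup {r | ∃ x : ∀ j, Fin (n j) → ℝ, (∀ j, isUnitVec (x j)) ∧ r = |tinner T (dtens x)|}

section Aux

variable {d : ℕ} {n : Fin d → ℕ}

lemma sum_dtens_sq (x : ∀ j, Fin (n j) → ℝ) (hx : ∀ j, isUnitVec (x j)) :
    ∑ idx, dtens x idx ^ 2 = 1 := by
  have h : ∑ idx : (∀ j, Fin (n j)), ∏ j, (x j (idx j)) ^ 2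
      = ∏ j, ∑ i, (x j i) ^ 2 := by
    rw [Finset.prod_univ_sum]
    simp
  simp only [dtens, ← Finset.prod_pow]
  rw [h]
  exact Finset.prod_eq_one (fun j _ => hx j)

end Aux

section Aux2

variable {d : ℕ} {n : Fin d → ℕ}

lemma sum_sq_expand (T B : (∀ j, Fin (n j)) → ℝ) :
    ∑ idx, (T idx - B idx) ^ 2
      = (∑ idx, T idx ^ 2) - 2 * tinner T B + ∑ idx, B idx ^ 2 := by
  have : ∀ idx : (∀ j, Fin (n j)),
      (T idx - B idx) ^ 2 = T idx ^ 2 - 2 * (T idx * B idx) + B idx ^ 2 := by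
    intro idx; ring
  rw [Finset.sum_congr rfl (fun idx _ => this idx)]
  rw [Finset.sum_add_distrib, Finset.sum_sub_distrib, tinner, Finset.mul_sum]

lemma Qval (T : (∀ j, Fin (n j)) → ℝ) (s : ℝ) (x : ∀ j, Fin (n j) → ℝ)
    (hx : ∀ j, isUnitVec (x j)) :
    ∑ idx, (T idx - (s • dtens x) idx) ^ 2
      = (∑ idx, T idx ^ 2) - 2 * s * tinner T (dtens x) + s ^ 2 := by
  rw [sum_sq_expand]
  have h1 : tinner T (s • dtens x) = s * tinner T (dtens x) := by
    simp only [tinner, Pi.smul_apply, smul_eq_mul, Finset.mul_sum]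
    exact Finset.sum_congr rfl (fun i _ => by ring)
  have h2 : ∑ idx, (s • dtens x) idx ^ 2 = s ^ 2 := by
    simp only [Pi.smul_apply, smul_eq_mul, mul_pow, ← Finset.mul_sum,
      sum_dtens_sq x hx, mul_one]
  rw [h1, h2]; ring

lemma specSet_props (hn : ∀ j, 0 < n j) (T : (∀ j, Fin (n j)) → ℝ) :
    (∃ x : ∀ j, Fin (n j) → ℝ, ∀ j, isUnitVec (x j)) ∧
      BddAbove {r | ∃ x : ∀ j, Fin (n j) → ℝ,
        (∀ j, isUnitVec (x j)) ∧ r = |tinner T (dtens x)|} := by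
  constructor
  · refine ⟨fun j i => if i = ⟨0, hn j⟩ then 1 else 0, fun j => ?_⟩
    unfold isUnitVec
    have : ∀ i : Fin (n j), ((if i = ⟨0, hn j⟩ then (1:ℝ) else 0)) ^ 2
        = if i = ⟨0, hn j⟩ then 1 else 0 := by intro i; split <;> norm_num
    rw [Finset.sum_congr rfl (fun i _ => this i), Finset.sum_ite_eq']
    simp
  · refine ⟨∑ idx, |T idx|, ?_⟩
    rintro r ⟨x, hx, rfl⟩
    have hb : ∀ idx : (∀ j, Fin (n j)), |dtens x idx| ≤ 1 := by
      intro idx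
      rw [dtens, Finset.abs_prod]
      apply Finset.prod_le_one (fun j _ => abs_nonneg _)
      intro j _
      have h1 : (x j (idx j)) ^ 2 ≤ 1 := by
        have := hx j
        unfold isUnitVec at this
        calc (x j (idx j)) ^ 2
            ≤ ∑ i, (x j i) ^ 2 :=
              Finset.single_le_sum (f := fun i => (x j i) ^ 2)
                (fun i _ => sq_nonneg _) (Finset.mem_univ _)
          _ = 1 := this
      exact (sq_le_one_iff_abs_le_one _).mp h1
    calc |tinner T (dtens x)| ≤ ∑ idx, |T idx * dtens x idx| :=
        Finset.abs_sum_le_sum_abs _ _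
      _ ≤ ∑ idx, |T idx| := by
        apply Finset.sum_le_sum
        intro idx _
        rw [abs_mul]
        nlinarith [abs_nonneg (T idx), hb idx, abs_nonneg (dtens x idx)]

end Aux2

section Aux3

variable {d : ℕ} {n : Fin d → ℕ}

lemma le_spec (hn : ∀ j, 0 < n j) (T : (∀ j, Fin (n j)) → ℝ)
    (x : ∀ j, Fin (n j) → ℝ) (hx : ∀ j, isUnitVec (x j)) :
    |tinner T (dtens x)| ≤ specNorm T :=
  le_csSup (specSet_props hn T).2 ⟨x, hx, rfl⟩

lemma spec_nonneg (hn : ∀ j, 0 < n j) (T : (∀ j, Fin (n j)) → ℝ) :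
    0 ≤ specNorm T := by
  obtain ⟨x, hx⟩ := (specSet_props hn T).1
  exact le_trans (abs_nonneg _) (le_spec hn T x hx)

lemma spec_sq_le (hn : ∀ j, 0 < n j) (T : (∀ j, Fin (n j)) → ℝ) {B : ℝ}
    (hB : 0 ≤ B) (h : ∀ x : ∀ j, Fin (n j) → ℝ, (∀ j, isUnitVec (x j)) →
      tinner T (dtens x) ^ 2 ≤ B) : specNorm T ^ 2 ≤ B := by
  obtain ⟨x, hx⟩ := (specSet_props hn T).1
  have hσ : specNorm T ≤ Real.sqrt B := by
    refine csSup_le ⟨|tinner T (dtens x)|, x, hx, rfl⟩ ?_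
    rintro r ⟨y, hy, rfl⟩
    exact Real.abs_le_sqrt (h y hy)
  calc specNorm T ^ 2 ≤ Real.sqrt B ^ 2 :=
        pow_le_pow_left₀ (spec_nonneg hn T) hσ 2
    _ = B := Real.sq_sqrt hB

lemma hsNorm_sq (U : (∀ j, Fin (n j)) → ℝ) :
    hsNorm U ^ 2 = ∑ idx, U idx ^ 2 :=
  Real.sq_sqrt (Finset.sum_nonneg fun _ _ => sq_nonneg _)

lemma sumsq_eq (T : (∀ j, Fin (n j)) → ℝ) (s : ℝ) (x : ∀ j, Fin (n j) → ℝ)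
    (hx : ∀ j, isUnitVec (x j)) :
    ∑ idx, (T - s • dtens x) idx ^ 2
      = (∑ idx, T idx ^ 2) - 2 * s * tinner T (dtens x) + s ^ 2 := by
  rw [← Qval T s x hx]
  exact Finset.sum_congr rfl fun idx _ => by simp

lemma tinner_smul (T : (∀ j, Fin (n j)) → ℝ) (s : ℝ) (B : (∀ j, Fin (n j)) → ℝ) :
    tinner T (s • B) = s * tinner T B := by
  simp only [tinner, Pi.smul_apply, smul_eq_mul, Finset.mul_sum]
  exact Finset.sum_congr rfl (fun i _ => by ring)

end Aux3


/-- A rank one tensor `𝒜` is a best rank one approximation of the nonzero tensor `T`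
iff `⟨T, 𝒜⟩ = ‖T‖²_{∞,2} = ‖𝒜‖²`. -/
theorem stmt6 {d : ℕ} {n : Fin d → ℕ} (hn : ∀ j, 0 < n j)
    (T : (∀ j, Fin (n j)) → ℝ) (hT : T ≠ 0)
    (A : (∀ j, Fin (n j)) → ℝ)
    (hA : ∃ (c : ℝ) (x : ∀ j, Fin (n j) → ℝ), c ≠ 0 ∧ (∀ j, isUnitVec (x j)) ∧
      A = c • dtens x) :
    (∀ (s : ℝ) (x : ∀ j, Fin (n j) → ℝ), (∀ j, isUnitVec (x j)) →
        hsNorm (T - A) ≤ hsNorm (T - s • dtens x)) ↔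
      (tinner T A = specNorm T ^ 2 ∧ specNorm T ^ 2 = hsNorm A ^ 2) := by
  obtain ⟨c, x0, hc, hx0, rfl⟩ := hA
  have hTA : tinner T (c • dtens x0) = c * tinner T (dtens x0) :=
    tinner_smul T c (dtens x0)
  have hA2 : hsNorm (c • dtens x0) ^ 2 = c ^ 2 := by
    rw [hsNorm_sq]
    simp only [Pi.smul_apply, smul_eq_mul, mul_pow, ← Finset.mul_sum,
      sum_dtens_sq x0 hx0, mul_one]
  constructor
  · intro hP
    have key : ∀ (s : ℝ) (x : ∀ j, Fin (n j) → ℝ), (∀ j, isUnitVec (x j)) →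
        (∑ idx, T idx ^ 2) - 2 * c * tinner T (dtens x0) + c ^ 2
          ≤ (∑ idx, T idx ^ 2) - 2 * s * tinner T (dtens x) + s ^ 2 := by
      intro s x hx
      have h3 : hsNorm (T - c • dtens x0) ^ 2 ≤ hsNorm (T - s • dtens x) ^ 2 :=
        pow_le_pow_left₀ (Real.sqrt_nonneg _) (hP s x hx) 2
      rwa [hsNorm_sq, hsNorm_sq, sumsq_eq T c x0 hx0, sumsq_eq T s x hx] at h3
    have ht0 : tinner T (dtens x0) = c := by
      have := key (tinner T (dtens x0)) x0 hx0
      nlinarith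
    have hstep : ∀ x : ∀ j, Fin (n j) → ℝ, (∀ j, isUnitVec (x j)) →
        tinner T (dtens x) ^ 2 ≤ c ^ 2 := by
      intro x hx
      have h4 := key (tinner T (dtens x)) x hx
      rw [ht0] at h4
      nlinarith
    have hσ2 : specNorm T ^ 2 ≤ c ^ 2 := spec_sq_le hn T (sq_nonneg c) hstep
    have hc2 : c ^ 2 ≤ specNorm T ^ 2 := by
      have h := le_spec hn T x0 hx0
      rw [← ht0]
      calc tinner T (dtens x0) ^ 2 = |tinner T (dtens x0)| ^ 2 := (sq_abs _).symm
        _ ≤ specNorm T ^ 2 := pow_le_pow_left₀ (abs_nonneg _) h 2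
    have hσc : specNorm T ^ 2 = c ^ 2 := le_antisymm hσ2 hc2
    refine ⟨?_, ?_⟩
    · rw [hTA, ht0, hσc]; ring
    · rw [hσc, hA2]
  · rintro ⟨h1, h2⟩
    have hσ2 : specNorm T ^ 2 = c ^ 2 := h2.trans hA2
    have ht0 : tinner T (dtens x0) = c := by
      have hcc : c * tinner T (dtens x0) = c * c := by
        rw [← hTA, h1, hσ2]; ring
      exact mul_left_cancel₀ hc hcc
    intro s x hx
    apply Real.sqrt_le_sqrt
    rw [sumsq_eq T c x0 hx0, sumsq_eq T s x hx, ht0]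
    have hle := le_spec hn T x hx
    nlinarith [sq_nonneg (s - tinner T (dtens x)), sq_abs (tinner T (dtens x)),
      pow_le_pow_left₀ (abs_nonneg (tinner T (dtens x))) hle 2, hσ2]
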